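/- Extraction of a zero-finding functional from a modulus of convergence for monotone sequences: suppose t assigns to every nondecreasing sequence c : ℕ → ℝ bounded by 1 and every k ≥ 1 a number t(c,k) such that for all N, M ≥ t(c,k), |c(N) − c(M)| ≤ 1/k. Then for every f : ℕ → ℕ such that f(n) = 0 for some n, there exists n ≤ t(c_f, 2) with f(n) = 0, where c_f(n) = 1 if f(i) = 0 for some i ≤ n and c_f(n) = 0 otherwise. -/
import Mathlib


open scoped Classical

theorem zero_finding_from_modulus
    (t : (ℕ → ℝ) → ℕ → ℕ)
    (ht : ∀ c : ℕ → ℝ, (∀ n : ℕ, 0 ≤ c n ∧ c n ≤ c (n + 1) ∧ c (n + 1) ≤ 1) →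
      ∀ k : ℕ, 1 ≤ k → ∀ N M : ℕ, t c k ≤ N → t c k ≤ M →
        |c N - c M| ≤ 1 / (k : ℝ)) :
    ∀ f : ℕ → ℕ, (∃ n, f n = 0) →
      ∃ n ≤ t (fun n => if ∃ i ≤ n, f i = 0 then (1:ℝ) else 0) 2, f n = 0 := by
  intro f hf
  set c : ℕ → ℝ := fun n => if ∃ i ≤ n, f i = 0 then (1:ℝ) else 0 with hc
  have hmono : ∀ n : ℕ, 0 ≤ c n ∧ c n ≤ c (n + 1) ∧ c (n + 1) ≤ 1 := by
    intro n
    simp only [hc]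
    refine ⟨by positivity, ?_, by split <;> norm_num⟩
    by_cases h : ∃ i ≤ n, f i = 0
    · obtain ⟨i, hi, hfi⟩ := h
      rw [if_pos ⟨i, hi, hfi⟩, if_pos ⟨i, hi.trans (Nat.le_succ n), hfi⟩]
    · rw [if_neg h]; split <;> norm_num
  by_contra hcon
  push_neg at hcon
  obtain ⟨n0, hn0⟩ := hf
  set T := t c 2 with hT
  have hcT : c T = 0 := by
    simp only [hc]
    rw [if_neg]
    rintro ⟨i, hi, hfi⟩
    exact hcon i hi hfi
  have hn0T : T ≤ max n0 T := le_max_right _ _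
  have hcn0 : c (max n0 T) = 1 := by
    simp only [hc]
    exact if_pos ⟨n0, le_max_left _ _, hn0⟩
  have := ht c hmono 2 (by norm_num) (max n0 T) T hn0T le_rfl
  rw [hcn0, hcT] at this
  norm_num at this
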